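/- Let Z satisfy 𝔓(Z > 0) = 1, and for t > 0 with 𝔓(Z > t) > 0 define L(t) = 𝔓(Z > t)/E[Z⁻¹·1{Z > t}] (the low-SNR capacity slope of truncated channel inversion with threshold t). Then: (i) L(t) ≥ t for every such t; (ii) L is nondecreasing: if 0 < t₁ ≤ t₂ and 𝔓(Z > t₂) > 0 then L(t₁) ≤ L(t₂); (iii) L(t) ≤ sup{z : F(z) < 1}; (iv) if 0 < E[Z⁻¹] < ∞ then L(t) ≥ 1/E[Z⁻¹]; and consequently (v) if E[Z] < ∞ and t ≥ E[Z], then L(t) ≥ E[Z], i.e., the low-SNR slope of TCI with threshold t ≥ E[Z] is at least the low-SNR slope of the AWGN capacity. -/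

import Mathlib

open MeasureTheory Filter Topology

namespace TciAux

variable {Ω : Type*} [MeasurableSpace Ω] {P : Measure Ω} [IsProbabilityMeasure P] {Z : Ω → ℝ}

lemma setA (hZ : Measurable Z) (t : ℝ) : MeasurableSet {ω | t < Z ω} :=
  measurableSet_lt measurable_const hZ

lemma measf (hZ : Measurable Z) (t : ℝ) :
    Measurable (fun ω => if t < Z ω then (Z ω)⁻¹ else 0) :=
  Measurable.ite (setA hZ t) hZ.inv measurable_const

lemma f_nonneg {t : ℝ} (ht : 0 < t) (ω : Ω) :
    0 ≤ (if t < Z ω then (Z ω)⁻¹ else 0) := by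
  split_ifs with h
  · exact inv_nonneg.mpr (le_of_lt (ht.trans h))
  · exact le_refl _

lemma intf (hZ : Measurable Z) {t : ℝ} (ht : 0 < t) :
    Integrable (fun ω => if t < Z ω then (Z ω)⁻¹ else 0) P := by
  refine ⟨(measf hZ t).aestronglyMeasurable, ?_⟩
  refine HasFiniteIntegral.of_bounded (C := t⁻¹) (ae_of_all _ fun ω => ?_)
  rw [Real.norm_eq_abs, abs_of_nonneg (f_nonneg ht ω)]
  split_ifs with h
  · exact inv_anti₀ ht h.le
  · positivity

lemma e_le (hZ : Measurable Z) {t : ℝ} (ht : 0 < t) :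
    ∫ ω, (if t < Z ω then (Z ω)⁻¹ else 0) ∂P ≤ t⁻¹ * (P {ω | t < Z ω}).toReal := by
  have hmono := integral_mono (μ := P) (intf hZ ht)
    ((integrable_const t⁻¹).indicator (setA hZ t)) (fun ω => ?_)
  · rwa [integral_indicator_const _ (setA hZ t), smul_eq_mul, mul_comm] at hmono
  · simp only [Set.indicator_apply, Set.mem_setOf_eq]
    split_ifs with h
    · exact inv_anti₀ ht h.le
    · exact le_refl _

lemma e_pos (hZ : Measurable Z) {t : ℝ} (ht : 0 < t) (hp : 0 < P {ω | t < Z ω}) :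
    0 < ∫ ω, (if t < Z ω then (Z ω)⁻¹ else 0) ∂P := by
  rw [integral_pos_iff_support_of_nonneg (fun ω => f_nonneg ht ω) (intf hZ ht)]
  refine lt_of_lt_of_le hp (measure_mono fun ω hω => ?_)
  simp only [Function.mem_support]
  have hω' : t < Z ω := hω
  rw [if_pos hω']
  exact ne_of_gt (inv_pos.mpr (ht.trans hω'))

end TciAux

/-- The low-SNR capacity slope `L(t) = P(Z > t)/E[Z⁻¹·1{Z > t}]` of truncated channel
inversion with threshold `t`. -/
noncomputable def tciSlope {Ω : Type*} [MeasurableSpace Ω] (P : Measure Ω) (Z : Ω → ℝ)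
    (t : ℝ) : ℝ :=
  (P {ω | t < Z ω}).toReal / ∫ ω, (if t < Z ω then (Z ω)⁻¹ else 0) ∂P

/-- **Properties of the low-SNR slope of truncated channel inversion.** Let `Z` satisfy
`P(Z > 0) = 1`, and consider `L(t) = P(Z > t)/E[Z⁻¹·1{Z > t}]` for `t > 0` with
`P(Z > t) > 0`. Then (i) `L(t) ≥ t`; (ii) `L` is nondecreasing; (iii) `L(t)` is at most any
upper bound of `{z : F(z) < 1}` (i.e. `L(t) ≤ sup{z : F(z) < 1}`); (iv) if `0 < E[Z⁻¹] < ∞`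
then `L(t) ≥ 1/E[Z⁻¹]`; and (v) if `E[Z] < ∞` and `t ≥ E[Z]` then `L(t) ≥ E[Z]`, the low-SNR
slope of the AWGN capacity. -/
theorem tci_low_snr_slope_properties
    {Ω : Type*} [MeasurableSpace Ω] (P : Measure Ω) [IsProbabilityMeasure P]
    (Z : Ω → ℝ) (hZ : Measurable Z) (hZpos : P {ω | 0 < Z ω} = 1) :
    (∀ t, 0 < t → 0 < P {ω | t < Z ω} → t ≤ tciSlope P Z t) ∧
    (∀ t₁ t₂, 0 < t₁ → t₁ ≤ t₂ → 0 < P {ω | t₂ < Z ω} →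
      tciSlope P Z t₁ ≤ tciSlope P Z t₂) ∧
    (∀ t, 0 < t → 0 < P {ω | t < Z ω} →
      ∀ M ∈ upperBounds {z : ℝ | P {ω | Z ω ≤ z} < 1}, tciSlope P Z t ≤ M) ∧
    (Integrable (fun ω => (Z ω)⁻¹) P → 0 < ∫ ω, (Z ω)⁻¹ ∂P →
      ∀ t, 0 < t → 0 < P {ω | t < Z ω} →
        (∫ ω, (Z ω)⁻¹ ∂P)⁻¹ ≤ tciSlope P Z t) ∧
    (Integrable Z P →
      ∀ t, 0 < t → 0 < P {ω | t < Z ω} → (∫ ω, Z ω ∂P) ≤ t →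
        (∫ ω, Z ω ∂P) ≤ tciSlope P Z t) := by
  classical
  -- Part (i)
  have hi : ∀ t, 0 < t → 0 < P {ω | t < Z ω} → t ≤ tciSlope P Z t := by
    intro t ht hp
    have hppos : 0 < (P {ω | t < Z ω}).toReal :=
      ENNReal.toReal_pos hp.ne' (measure_ne_top P _)
    have he := TciAux.e_pos hZ ht hp
    have hle := TciAux.e_le (P := P) hZ ht
    unfold tciSlope
    rw [le_div_iff₀ he]
    nlinarith [mul_inv_cancel₀ ht.ne', mul_le_mul_of_nonneg_left hle ht.le]
  refine ⟨hi, ?_, ?_, ?_, ?_⟩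
  -- Part (ii): monotonicity
  · intro t₁ t₂ ht₁ ht12 hp₂
    have ht₂ : 0 < t₂ := ht₁.trans_le ht12
    have hp₁ : 0 < P {ω | t₁ < Z ω} :=
      lt_of_lt_of_le hp₂ (measure_mono fun ω h => lt_of_le_of_lt ht12 h)
    set B := {ω | t₁ < Z ω ∧ Z ω ≤ t₂} with hBdef
    have hBm : MeasurableSet B :=
      (measurableSet_lt measurable_const hZ).inter (measurableSet_le hZ measurable_const)
    have hunion : {ω | t₁ < Z ω} = {ω | t₂ < Z ω} ∪ B := by
      ext ω
      simp only [Set.mem_union, Set.mem_setOf_eq, hBdef]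
      constructor
      · intro h
        rcases le_or_gt (Z ω) t₂ with h2 | h2
        · exact Or.inr ⟨h, h2⟩
        · exact Or.inl h2
      · rintro (h | ⟨h, _⟩)
        exacts [lt_of_le_of_lt ht12 h, h]
    have hdisj : Disjoint {ω | t₂ < Z ω} B := by
      rw [Set.disjoint_left]
      rintro ω h ⟨_, h2⟩
      exact absurd h (not_lt.mpr h2)
    have hPadd : (P {ω | t₁ < Z ω}).toReal
        = (P {ω | t₂ < Z ω}).toReal + (P B).toReal := by
      rw [hunion, measure_union hdisj hBm,
        ENNReal.toReal_add (measure_ne_top _ _) (measure_ne_top _ _)]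
    have hint₁ := TciAux.intf (P := P) hZ ht₁
    have hint₂ := TciAux.intf (P := P) hZ ht₂
    have he₁pos := TciAux.e_pos hZ ht₁ hp₁
    have he₂pos := TciAux.e_pos hZ ht₂ hp₂
    have he₂le := TciAux.e_le (P := P) hZ ht₂
    have hq0 : 0 ≤ (P B).toReal := ENNReal.toReal_nonneg
    have hp₂pos : 0 < (P {ω | t₂ < Z ω}).toReal :=
      ENNReal.toReal_pos hp₂.ne' (measure_ne_top P _)
    have hmid : t₂⁻¹ * (P B).toReal ≤
        (∫ ω, (if t₁ < Z ω then (Z ω)⁻¹ else 0) ∂P)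
          - ∫ ω, (if t₂ < Z ω then (Z ω)⁻¹ else 0) ∂P := by
      rw [← integral_sub hint₁ hint₂]
      have hmono := integral_mono (μ := P)
        ((integrable_const t₂⁻¹).indicator hBm) (hint₁.sub hint₂) (fun ω => ?_)
      · rwa [integral_indicator_const _ hBm, smul_eq_mul, mul_comm] at hmono
      · simp only [Set.indicator_apply, Pi.sub_apply, hBdef, Set.mem_setOf_eq]
        rcases lt_or_ge t₂ (Z ω) with h2 | h2
        · rw [if_neg (fun hb => absurd h2 (not_lt.mpr hb.2)),
            if_pos (lt_of_le_of_lt ht12 h2), if_pos h2, sub_self]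
        · rw [if_neg (not_lt.mpr h2)]
          rcases lt_or_ge t₁ (Z ω) with h1 | h1
          · rw [if_pos ⟨h1, h2⟩, if_pos h1, sub_zero]
            exact inv_anti₀ (ht₁.trans h1) h2
          · rw [if_neg (fun hb => absurd hb.1 (not_lt.mpr h1)), if_neg (not_lt.mpr h1),
              sub_zero]
    unfold tciSlope
    rw [div_le_div_iff₀ he₁pos he₂pos]
    nlinarith [mul_le_mul_of_nonneg_left he₂le hq0,
      mul_le_mul_of_nonneg_left hmid hp₂pos.le]
  -- Part (iii): upper bound by essential sup
  · intro t ht hp M hM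
    have hA := TciAux.setA hZ t
    have key : ∀ z : ℝ, P {ω | Z ω ≤ z} < 1 → z ≤ M := fun z hz => hM hz
    have hMt : t ≤ M := by
      apply key
      by_contra hcon
      push_neg at hcon
      have h1 : P {ω | Z ω ≤ t} = 1 := le_antisymm prob_le_one hcon
      have hc : {ω | Z ω ≤ t}ᶜ = {ω | t < Z ω} := by
        ext ω; simp [not_le]
      have h2 := measure_compl (measurableSet_le hZ measurable_const)
        (measure_ne_top P {ω | Z ω ≤ t})
      rw [hc, h1, measure_univ, tsub_self] at h2
      exact absurd h2 hp.ne'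
    have hM0 : 0 < M := ht.trans_le hMt
    have haeM : ∀ᵐ ω ∂P, Z ω ≤ M := by
      have hz : ∀ z : ℝ, M < z → P {ω | z < Z ω} = 0 := by
        intro z hzM
        have h1 : P {ω | Z ω ≤ z} = 1 := by
          by_contra hne
          have hlt : P {ω | Z ω ≤ z} < 1 := lt_of_le_of_ne prob_le_one hne
          exact absurd (key z hlt) (not_le.mpr hzM)
        have hc : {ω | Z ω ≤ z}ᶜ = {ω | z < Z ω} := by
          ext ω; simp [not_le]
        have h2 := measure_compl (measurableSet_le hZ measurable_const)
          (measure_ne_top P {ω | Z ω ≤ z})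
        rw [hc, h1, measure_univ, tsub_self] at h2
        exact h2
      have hsub : {ω | M < Z ω} ⊆ ⋃ n : ℕ, {ω | M + ((n : ℝ) + 1)⁻¹ < Z ω} := by
        intro ω hω
        have hω' : M < Z ω := hω
        obtain ⟨n, hn⟩ := exists_nat_one_div_lt (sub_pos.mpr hω')
        refine Set.mem_iUnion.mpr ⟨n, ?_⟩
        simp only [Set.mem_setOf_eq]
        rw [one_div] at hn
        linarith [hn]
      have h0 : P {ω | M < Z ω} = 0 := by
        refine measure_mono_null hsub (measure_iUnion_null fun n => hz _ ?_)
        have : (0 : ℝ) < ((n : ℝ) + 1)⁻¹ := by positivity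
        linarith
      rw [ae_iff]
      simpa [not_le] using h0
    have he := TciAux.e_pos hZ ht hp
    have hppos : 0 < (P {ω | t < Z ω}).toReal :=
      ENNReal.toReal_pos hp.ne' (measure_ne_top P _)
    have hlow : M⁻¹ * (P {ω | t < Z ω}).toReal ≤
        ∫ ω, (if t < Z ω then (Z ω)⁻¹ else 0) ∂P := by
      have hmono := integral_mono_ae (μ := P)
        ((integrable_const M⁻¹).indicator hA) (TciAux.intf hZ ht) ?_
      · rwa [integral_indicator_const _ hA, smul_eq_mul, mul_comm] at hmono
      · filter_upwards [haeM] with ω hω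
        simp only [Set.indicator_apply, Set.mem_setOf_eq]
        split_ifs with h
        · exact inv_anti₀ (ht.trans h) hω
        · exact le_refl _
    unfold tciSlope
    rw [div_le_iff₀ he]
    nlinarith [mul_inv_cancel₀ hM0.ne', mul_le_mul_of_nonneg_left hlow hM0.le]
  -- Part (iv): lower bound by 1/E[Z⁻¹]
  · intro hI hIpos t ht hp
    have hA := TciAux.setA hZ t
    have he := TciAux.e_pos hZ ht hp
    have hele := TciAux.e_le (P := P) hZ ht
    have hppos : 0 < (P {ω | t < Z ω}).toReal :=
      ENNReal.toReal_pos hp.ne' (measure_ne_top P _)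
    have hp1 : (P {ω | t < Z ω}).toReal ≤ 1 := by
      simpa using ENNReal.toReal_mono ENNReal.one_ne_top (prob_le_one (μ := P) (s := {ω | t < Z ω}))
    have haepos : ∀ᵐ ω ∂P, 0 < Z ω := by
      have h2 := measure_compl (s := {ω | 0 < Z ω}) (measurableSet_lt measurable_const hZ)
        (measure_ne_top P _)
      rw [hZpos, measure_univ, tsub_self] at h2
      rw [ae_iff]
      simpa [not_lt, Set.compl_setOf] using h2
    have hfg : ∀ ω, (if t < Z ω then (0:ℝ) else (Z ω)⁻¹)
        = (Z ω)⁻¹ - (if t < Z ω then (Z ω)⁻¹ else 0) := by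
      intro ω; split_ifs <;> ring
    have hgint : Integrable (fun ω => if t < Z ω then (0:ℝ) else (Z ω)⁻¹) P := by
      simp only [hfg]
      exact hI.sub (TciAux.intf hZ ht)
    have hg : ∫ ω, (if t < Z ω then (0:ℝ) else (Z ω)⁻¹) ∂P
        = (∫ ω, (Z ω)⁻¹ ∂P) - ∫ ω, (if t < Z ω then (Z ω)⁻¹ else 0) ∂P := by
      simp only [hfg]
      exact integral_sub hI (TciAux.intf hZ ht)
    have hcompl : (P ({ω | t < Z ω}ᶜ)).toReal = 1 - (P {ω | t < Z ω}).toReal := by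
      rw [measure_compl hA (measure_ne_top P _), measure_univ,
        ENNReal.toReal_sub_of_le prob_le_one ENNReal.one_ne_top]
      simp
    have hglow : t⁻¹ * (1 - (P {ω | t < Z ω}).toReal) ≤
        ∫ ω, (if t < Z ω then (0:ℝ) else (Z ω)⁻¹) ∂P := by
      have hmono := integral_mono_ae (μ := P)
        ((integrable_const t⁻¹).indicator hA.compl) hgint ?_
      · rwa [integral_indicator_const _ hA.compl, smul_eq_mul, mul_comm, measureReal_def, hcompl] at hmono
      · filter_upwards [haepos] with ω hω
        by_cases h : t < Z ω
        · simp [h, Set.indicator_apply]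
        · rw [Set.indicator_of_mem (by simpa using h), if_neg h]
          exact inv_anti₀ hω (not_lt.1 h)
    unfold tciSlope
    rw [inv_eq_one_div, div_le_div_iff₀ hIpos he]
    have ht' : (0:ℝ) < t⁻¹ := by positivity
    nlinarith [mul_le_mul_of_nonneg_left hele (sub_nonneg.mpr hp1),
      mul_le_mul_of_nonneg_left (hg ▸ hglow) hppos.le]
  -- Part (v): slope at least E[Z] when t ≥ E[Z]
  · intro _ t ht hp hle
    exact hle.trans (hi t ht hp)
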